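/- Let f, g : {0,1}^{m+1} → Z_q form a q-ary Golay array pair of size 2^(m+1), and define f_0(x) = f(x,0), f_1(x) = f(x,1), g_0(x) = g(x,0), g_1(x) = g(x,1) for x ∈ {0,1}^m, with generating functions F_0, F_1, G_0, G_1 ∈ ℂ[z_1,…,z_m]. Then for every z ∈ ℂ^m with all coordinates nonzero, F_0(z)·F̄_1(z⁻¹) + G_0(z)·Ḡ_1(z⁻¹) = 0; equivalently, for every shift τ ∈ {−1,0,1}^m, the aperiodic cross-correlations satisfy C_{f_0,f_1}(τ) + C_{g_0,g_1}(τ) = 0. -/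
import Mathlib


open scoped BigOperators

/-- ζ = exp(2πi/q). -/
noncomputable def zeta (q : ℕ) : ℂ := Complex.exp (2 * Real.pi * Complex.I / q)

/-- ζ^c for c ∈ Z_q (well defined since ζ^q = 1). -/
noncomputable def zetaPow (q : ℕ) (c : ZMod q) : ℂ := zeta q ^ c.val

/-- Aperiodic cross-correlation of arrays u, v at shift τ:
    C_{u,v}(τ) = Σ_{x, x+τ ∈ {0,1}^m} ζ^{u(x+τ) - v(x)}. -/
noncomputable def corr (q m : ℕ) (u v : (Fin m → Fin 2) → ZMod q) (τ : Fin m → ℤ) : ℂ :=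
  ∑ y : Fin m → Fin 2, ∑ x : Fin m → Fin 2,
    if ∀ i, ((y i : ℕ) : ℤ) - ((x i : ℕ) : ℤ) = τ i then zetaPow q (u y - v x) else 0

/-- (f, g) is a Golay array pair of size 2^(m). -/
def IsGAP (q m : ℕ) (f g : (Fin m → Fin 2) → ZMod q) : Prop :=
  ∀ τ : Fin m → ℤ, (∀ i, τ i = -1 ∨ τ i = 0 ∨ τ i = 1) → τ ≠ 0 →
    corr q m f f τ + corr q m g g τ = 0

/-- Generating function of an array, as a function on ℂ^m. -/
noncomputable def genFun (q m : ℕ) (f : (Fin m → Fin 2) → ZMod q) (z : Fin m → ℂ) : ℂ :=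
  ∑ x : Fin m → Fin 2, zetaPow q (f x) * ∏ i, (z i) ^ ((x i : ℕ))

/-- Coefficient-wise conjugate of the generating function, as a function on ℂ^m. -/
noncomputable def genFunConj (q m : ℕ) (f : (Fin m → Fin 2) → ZMod q) (z : Fin m → ℂ) : ℂ :=
  ∑ x : Fin m → Fin 2, (starRingEnd ℂ) (zetaPow q (f x)) * ∏ i, (z i) ^ ((x i : ℕ))

/-- Generating function of an array, as a multivariate polynomial. -/
noncomputable def genPoly (q m : ℕ) (f : (Fin m → Fin 2) → ZMod q) :
    MvPolynomial (Fin m) ℂ :=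
  ∑ x : Fin m → Fin 2, MvPolynomial.C (zetaPow q (f x)) * ∏ i, (MvPolynomial.X i) ^ ((x i : ℕ))

/-- Generating function of an array on a subset S of the coordinates. -/
noncomputable def genPolyOn (q m : ℕ) (S : Finset (Fin m)) (a : (↥S → Fin 2) → ZMod q) :
    MvPolynomial (Fin m) ℂ :=
  ∑ u : ↥S → Fin 2, MvPolynomial.C (zetaPow q (a u)) * ∏ k : ↥S, (MvPolynomial.X (k : Fin m)) ^ ((u k : ℕ))

/-- (f, g) is a standard Golay array pair of size 2^(m). -/
def IsStandard (q m : ℕ) (hm : 0 < m) (f g : (Fin m → Fin 2) → ZMod q) : Prop :=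
  ∃ π : Equiv.Perm (Fin m), ∃ c0 c' : ZMod q, ∃ c : Fin m → ZMod q,
    (∀ x : Fin m → Fin 2,
        f x = ((q / 2 : ℕ) : ZMod q) *
            (∑ k : Fin m, if h : (k : ℕ) + 1 < m then
                ((x (π k) : ℕ) : ZMod q) * ((x (π ⟨(k : ℕ) + 1, h⟩) : ℕ) : ZMod q) else 0)
          + (∑ k : Fin m, c k * ((x k : ℕ) : ZMod q)) + c0)
    ∧ (∀ x : Fin m → Fin 2,
        g x = f x + ((q / 2 : ℕ) : ZMod q) * ((x (π ⟨0, hm⟩) : ℕ) : ZMod q) + c')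

lemma zeta_ne_zero (q : ℕ) : zeta q ≠ 0 := Complex.exp_ne_zero _

lemma zeta_pow_q (q : ℕ) (hq : 0 < q) : zeta q ^ q = 1 := by
  have hqc : (q : ℂ) ≠ 0 := Nat.cast_ne_zero.mpr hq.ne'
  rw [zeta, ← Complex.exp_nat_mul]
  have : (q : ℂ) * (2 * Real.pi * Complex.I / q) = 2 * Real.pi * Complex.I := by
    field_simp
  rw [this, Complex.exp_two_pi_mul_I]

lemma zeta_zpow_congr (q : ℕ) (hq : 0 < q) {n m : ℤ} (h : (q : ℤ) ∣ n - m) :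
    zeta q ^ n = zeta q ^ m := by
  obtain ⟨k, hk⟩ := h
  have hz := zeta_ne_zero q
  have hn : n = m + (q : ℤ) * k := by linarith
  rw [hn, zpow_add₀ hz, zpow_mul, zpow_natCast, zeta_pow_q q hq, one_zpow, mul_one]

lemma zetaPow_mul_conj (q : ℕ) (hq : 0 < q) (a b : ZMod q) :
    zetaPow q a * (starRingEnd ℂ) (zetaPow q b) = zetaPow q (a - b) := by
  haveI : NeZero q := ⟨hq.ne'⟩
  have hz := zeta_ne_zero q
  have hconj : (starRingEnd ℂ) (zeta q) = (zeta q)⁻¹ := by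
    rw [zeta, ← Complex.exp_conj]
    rw [map_div₀, ← Complex.exp_neg]
    congr 1
    simp [map_div₀, Complex.conj_I, Complex.conj_ofReal, map_ofNat]
    ring
  rw [zetaPow, zetaPow, zetaPow, map_pow, hconj, inv_pow, ← zpow_natCast (zeta q) a.val,
    ← zpow_natCast (zeta q) b.val, ← zpow_natCast (zeta q) (a-b).val, ← zpow_neg, ← zpow_add₀ hz]
  apply zeta_zpow_congr q hq
  have : (((a.val : ℤ) + -(b.val : ℤ) - ((a - b).val : ℤ) : ℤ) : ZMod q) = 0 := by
    push_cast
    rw [ZMod.natCast_val, ZMod.natCast_val, ZMod.natCast_val]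
    simp [ZMod.intCast_cast]
  exact (ZMod.intCast_zmod_eq_zero_iff_dvd _ q).mp this

def snocE (m : ℕ) : ((Fin m → Fin 2) × Fin 2) ≃ (Fin (m + 1) → Fin 2) where
  toFun p := Fin.snoc p.1 p.2
  invFun y := (fun i => y i.castSucc, y (Fin.last m))
  left_inv p := by
    ext i
    · simp [Fin.snoc_castSucc]
    · simp [Fin.snoc_last]
  right_inv y := Fin.snoc_init_self y

lemma sum_snoc {M : Type*} [AddCommMonoid M] (m : ℕ) (F : (Fin (m + 1) → Fin 2) → M) :
    ∑ y : Fin (m + 1) → Fin 2, F y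
      = ∑ y : Fin m → Fin 2, ∑ b : Fin 2, F (Fin.snoc y b) := by
  calc ∑ y : Fin (m + 1) → Fin 2, F y
      = ∑ p : (Fin m → Fin 2) × Fin 2, F (Fin.snoc p.1 p.2) :=
        (Fintype.sum_equiv (snocE m) _ _ (fun p => rfl)).symm
    _ = _ := Fintype.sum_prod_type _

lemma cond_snoc (m : ℕ) (y x : Fin m → Fin 2) (b c : Fin 2) (τ : Fin m → ℤ) (e : ℤ) :
    (∀ i : Fin (m + 1), (((Fin.snoc y b : Fin (m+1) → Fin 2) i : ℕ) : ℤ)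
        - (((Fin.snoc x c : Fin (m+1) → Fin 2) i : ℕ) : ℤ) = (Fin.snoc τ e : Fin (m+1) → ℤ) i)
      ↔ ((∀ i : Fin m, ((y i : ℕ) : ℤ) - ((x i : ℕ) : ℤ) = τ i)
          ∧ ((b : ℕ) : ℤ) - ((c : ℕ) : ℤ) = e) := by
  constructor
  · intro h
    refine ⟨fun i => ?_, ?_⟩
    · have := h i.castSucc
      simpa [Fin.snoc_castSucc] using this
    · have := h (Fin.last m)
      simpa [Fin.snoc_last] using this
  · rintro ⟨h1, h2⟩ i
    induction i using Fin.lastCases with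
    | last => simpa [Fin.snoc_last] using h2
    | cast i => simpa [Fin.snoc_castSucc] using h1 i

lemma corr_snoc (q m : ℕ) (u v : (Fin (m + 1) → Fin 2) → ZMod q) (τ : Fin m → ℤ) :
    corr q (m + 1) u v (Fin.snoc τ (-1))
      = corr q m (fun x => u (Fin.snoc x 0)) (fun x => v (Fin.snoc x 1)) τ := by
  rw [corr, corr]
  simp only [sum_snoc, Fin.sum_univ_two, cond_snoc, Fin.val_zero, Fin.val_one,
    Nat.cast_zero, Nat.cast_one]
  norm_num

lemma part2 (q m : ℕ) (f g : (Fin (m + 1) → Fin 2) → ZMod q) (hGAP : IsGAP q (m + 1) f g)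
    (τ : Fin m → ℤ) (hτ : ∀ i, τ i = -1 ∨ τ i = 0 ∨ τ i = 1) :
    corr q m (fun x => f (Fin.snoc x 0)) (fun x => f (Fin.snoc x 1)) τ
      + corr q m (fun x => g (Fin.snoc x 0)) (fun x => g (Fin.snoc x 1)) τ = 0 := by
  have h := hGAP (Fin.snoc τ (-1)) ?_ ?_
  · rwa [corr_snoc, corr_snoc] at h
  · intro i
    induction i using Fin.lastCases with
    | last => simp [Fin.snoc_last]
    | cast i => simpa [Fin.snoc_castSucc] using hτ i
  · intro h0
    have := congrFun h0 (Fin.last m)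
    simp [Fin.snoc_last] at this

lemma prod_expand (q m : ℕ) (hq : 0 < q) (u v : (Fin m → Fin 2) → ZMod q)
    (z : Fin m → ℂ) (hz : ∀ i, z i ≠ 0) :
    genFun q m u z * genFunConj q m v (fun i => (z i)⁻¹)
      = ∑ y : Fin m → Fin 2, ∑ x : Fin m → Fin 2,
          zetaPow q (u y - v x) * ∏ i, z i ^ (((y i : ℕ) : ℤ) - ((x i : ℕ) : ℤ)) := by
  rw [genFun, genFunConj, Finset.sum_mul_sum]
  refine Finset.sum_congr rfl fun y _ => Finset.sum_congr rfl fun x _ => ?_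
  rw [mul_mul_mul_comm, zetaPow_mul_conj q hq, ← Finset.prod_mul_distrib]
  congr 1
  refine Finset.prod_congr rfl fun i _ => ?_
  rw [zpow_sub₀ (hz i), zpow_natCast, zpow_natCast, inv_pow, div_eq_mul_inv]

def tIdx (m : ℕ) (y x : Fin m → Fin 2) (i : Fin m) : Fin 3 :=
  ⟨(y i : ℕ) + 1 - (x i : ℕ), by have := (y i).isLt; have := (x i).isLt; omega⟩

lemma cond_iff_tIdx (m : ℕ) (y x : Fin m → Fin 2) (t : Fin m → Fin 3) :
    (∀ i, ((y i : ℕ) : ℤ) - ((x i : ℕ) : ℤ) = ((t i : ℕ) : ℤ) - 1) ↔ t = tIdx m y x := by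
  constructor
  · intro h
    funext i
    have hi := h i
    apply Fin.ext
    show (t i : ℕ) = (y i : ℕ) + 1 - (x i : ℕ)
    have := (x i).isLt
    omega
  · rintro rfl i
    show ((y i : ℕ) : ℤ) - ((x i : ℕ) : ℤ) = (((y i : ℕ) + 1 - (x i : ℕ) : ℕ) : ℤ) - 1
    have := (x i).isLt
    have := (y i).isLt
    omega

lemma key (q m : ℕ) (hq : 0 < q) (u v : (Fin m → Fin 2) → ZMod q)
    (z : Fin m → ℂ) (hz : ∀ i, z i ≠ 0) :
    genFun q m u z * genFunConj q m v (fun i => (z i)⁻¹)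
      = ∑ t : Fin m → Fin 3,
          corr q m u v (fun i => ((t i : ℕ) : ℤ) - 1) * ∏ i, z i ^ (((t i : ℕ) : ℤ) - 1) := by
  rw [prod_expand q m hq u v z hz]
  simp only [corr, Finset.sum_mul, ite_mul, zero_mul]
  conv_rhs => rw [Finset.sum_comm]
  refine Finset.sum_congr rfl fun y _ => ?_
  conv_rhs => rw [Finset.sum_comm]
  refine Finset.sum_congr rfl fun x _ => ?_
  simp only [cond_iff_tIdx]
  rw [Finset.sum_ite_eq' Finset.univ (tIdx m y x)
    (fun t => zetaPow q (u y - v x) * ∏ i, z i ^ (((t i : ℕ) : ℤ) - 1))]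
  simp only [Finset.mem_univ, if_true]
  congr 1
  refine Finset.prod_congr rfl fun i _ => ?_
  congr 1
  show ((y i : ℕ) : ℤ) - ((x i : ℕ) : ℤ) = (((y i : ℕ) + 1 - (x i : ℕ) : ℕ) : ℤ) - 1
  have := (x i).isLt
  have := (y i).isLt
  omega

/-- if (f,g) is a GAP of size 2^(m+1), then
    F₀(z)·F̄₁(z⁻¹) + G₀(z)·Ḡ₁(z⁻¹) = 0 on nonzero z; equivalently the cross-correlations
    satisfy C_{f₀,f₁}(τ) + C_{g₀,g₁}(τ) = 0 for every shift τ. -/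
theorem gap_restrictions_crosscorr (q m : ℕ) (hq : 0 < q)
    (f g : (Fin (m + 1) → Fin 2) → ZMod q) (hGAP : IsGAP q (m + 1) f g) :
    (∀ z : Fin m → ℂ, (∀ i, z i ≠ 0) →
      genFun q m (fun x => f (Fin.snoc x 0)) z
          * genFunConj q m (fun x => f (Fin.snoc x 1)) (fun i => (z i)⁻¹)
        + genFun q m (fun x => g (Fin.snoc x 0)) z
          * genFunConj q m (fun x => g (Fin.snoc x 1)) (fun i => (z i)⁻¹) = 0) ∧
    (∀ τ : Fin m → ℤ, (∀ i, τ i = -1 ∨ τ i = 0 ∨ τ i = 1) →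
      corr q m (fun x => f (Fin.snoc x 0)) (fun x => f (Fin.snoc x 1)) τ
        + corr q m (fun x => g (Fin.snoc x 0)) (fun x => g (Fin.snoc x 1)) τ = 0) := by
  constructor
  · intro z hz
    rw [key q m hq _ _ z hz, key q m hq _ _ z hz, ← Finset.sum_add_distrib]
    refine Finset.sum_eq_zero fun t _ => ?_
    have h0 := part2 q m f g hGAP (fun i => ((t i : ℕ) : ℤ) - 1)
      (fun i => by
        show ((t i : ℕ) : ℤ) - 1 = -1 ∨ ((t i : ℕ) : ℤ) - 1 = 0 ∨ ((t i : ℕ) : ℤ) - 1 = 1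
        have := (t i).isLt; omega)
    rw [← add_mul, h0, zero_mul]
  · exact part2 q m f g hGAP
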